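/- Let t_0, t_1 ≥ 0 with t_0² + t_1² = 1, and a, b, c ∈ ℝ. Let T_1 = diag-pattern matrix with entries 2t_0t_1 at positions (1,1) and (3,3); T_2 with single entry t_0² − t_1² at (2,2); T_3 with entries 2t_0t_1 at positions (1,3) and (3,1). Then ‖aT_1 + bT_2 + cT_3‖_tr = |b||t_0² − t_1²| + 2(|a + c| + |a − c|)t_0t_1. -/

import Mathlib

open Matrix
open scoped ComplexOrder

/-- The positive semidefinite square root of a positive semidefinite matrix
(the definition `Matrix.PosSemidef.sqrt` of the older Mathlib, since removed). -/
noncomputable def Matrix.PosSemidef.sqrt {n : Type*} [Fintype n] [DecidableEq n]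
    {𝕜 : Type*} [RCLike 𝕜] {A : Matrix n n 𝕜} (hA : A.PosSemidef) : Matrix n n 𝕜 :=
  hA.1.eigenvectorUnitary.1 * diagonal ((↑) ∘ (Real.sqrt ·) ∘ hA.1.eigenvalues) *
    (star hA.1.eigenvectorUnitary : Matrix n n 𝕜)

/-- The trace norm `‖P‖_tr = tr √(P†P)` of a complex rectangular matrix
(the sum of its singular values). -/
noncomputable def traceNorm {m n : Type*} [Fintype m] [Fintype n] [DecidableEq n]
    (P : Matrix m n ℂ) : ℝ :=
  RCLike.re (Matrix.PosSemidef.sqrt (Matrix.posSemidef_conjTranspose_mul_self P)).trace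

private noncomputable def S0 (u v r : ℝ) : Matrix (Fin 3) (Fin 3) ℝ :=
  !![(u + v) / 2, 0, (u - v) / 2; 0, r, 0; (u - v) / 2, 0, (u + v) / 2]

private lemma S0_mul (u v r u' v' r' : ℝ) :
    S0 u v r * S0 u' v' r' = S0 (u * u') (v * v') (r * r') := by
  simp only [S0, Matrix.mul_fin_three]
  norm_num
  ring_nf
  simp

open scoped MatrixOrder in
private lemma psd_eq_sqrt_of_sq_eq {n : Type*} [Fintype n] [DecidableEq n]
    {A B : Matrix n n ℂ} (hB : B.PosSemidef) (hA : A.PosSemidef) (h : B ^ 2 = A) :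
    B = hA.sqrt := by
  have h1 : CFC.sqrt A = B := CFC.sqrt_unique (by rw [← h, pow_two]) hB.nonneg
  have h2 : CFC.sqrt A = hA.sqrt := by
    rw [CFC.sqrt_eq_real_sqrt A hA.nonneg, cfcₙ_eq_cfc, hA.1.cfc_eq, Matrix.IsHermitian.cfc,
      Unitary.conjStarAlgAut_apply, Matrix.PosSemidef.sqrt]
  rw [← h1, h2]

private lemma S0_conjTranspose (u v r : ℝ) : (S0 u v r)ᴴ = S0 u v r := by
  simp only [S0]
  ext i j
  fin_cases i <;> fin_cases j <;> simp

private lemma S0_psd (u v r : ℝ) (hu : 0 ≤ u) (hv : 0 ≤ v) (hr : 0 ≤ r) :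
    Matrix.PosSemidef ((S0 u v r).map Complex.ofRealHom) := by
  have key : (S0 u v r).map Complex.ofRealHom
      = ((S0 (Real.sqrt u) (Real.sqrt v) (Real.sqrt r)).map Complex.ofRealHom)ᴴ
        * ((S0 (Real.sqrt u) (Real.sqrt v) (Real.sqrt r)).map Complex.ofRealHom) := by
    rw [← Matrix.conjTranspose_map _ (fun x => by simp [Complex.conj_ofReal]),
      ← Matrix.map_mul, S0_conjTranspose, S0_mul,
      Real.mul_self_sqrt hu, Real.mul_self_sqrt hv, Real.mul_self_sqrt hr]
  rw [key]
  exact Matrix.posSemidef_conjTranspose_mul_self _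

/-- Trace norm of `a T₁ + b T₂ + c T₃` where `T₁` has entries `2t₀t₁` at `(1,1)`
and `(3,3)`, `T₂` has the single entry `t₀² − t₁²` at `(2,2)`, and `T₃` has
entries `2t₀t₁` at `(1,3)` and `(3,1)`:
`‖·‖_tr = |b||t₀² − t₁²| + 2(|a + c| + |a − c|) t₀ t₁`. -/
theorem traceNorm_case_ii (t0 t1 a b c : ℝ) (ht0 : 0 ≤ t0) (ht1 : 0 ≤ t1)
    (h : t0 ^ 2 + t1 ^ 2 = 1) :
    traceNorm ((a • !![2 * t0 * t1, 0, 0; 0, 0, 0; 0, 0, 2 * t0 * t1]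
        + b • !![0, 0, 0; 0, t0 ^ 2 - t1 ^ 2, 0; 0, 0, 0]
        + c • !![0, 0, 2 * t0 * t1; 0, 0, 0; 2 * t0 * t1, 0, 0] : Matrix (Fin 3) (Fin 3) ℝ).map
          (fun x => (x : ℂ))) =
      |b| * |t0 ^ 2 - t1 ^ 2| + 2 * (|a + c| + |a - c|) * t0 * t1 := by
  set x := a * (2 * t0 * t1) with hx
  set z := c * (2 * t0 * t1) with hz
  set y := b * (t0 ^ 2 - t1 ^ 2) with hy
  have hMreal : (a • !![2 * t0 * t1, 0, 0; 0, 0, 0; 0, 0, 2 * t0 * t1]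
        + b • !![0, 0, 0; 0, t0 ^ 2 - t1 ^ 2, 0; 0, 0, 0]
        + c • !![0, 0, 2 * t0 * t1; 0, 0, 0; 2 * t0 * t1, 0, 0] : Matrix (Fin 3) (Fin 3) ℝ)
      = S0 (x + z) (x - z) y := by
    ext i j
    fin_cases i <;> fin_cases j <;>
      simp [S0, hx, hy, hz, Matrix.vecHead, Matrix.vecTail] <;> ring
  have hfun : (fun x : ℝ => (x : ℂ)) = (Complex.ofRealHom : ℝ → ℂ) := rfl
  rw [hMreal, hfun]
  set P := (S0 (x + z) (x - z) y).map (Complex.ofRealHom : ℝ → ℂ) with hP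
  have hS := S0_psd |x + z| |x - z| |y| (abs_nonneg _) (abs_nonneg _) (abs_nonneg _)
  have hsq : ((S0 |x + z| |x - z| |y|).map Complex.ofRealHom) ^ 2 = Pᴴ * P := by
    rw [hP, ← Matrix.conjTranspose_map _ (fun w => by simp [Complex.conj_ofReal]),
      ← Matrix.map_mul, S0_conjTranspose, S0_mul, pow_two, ← Matrix.map_mul, S0_mul,
      abs_mul_abs_self, abs_mul_abs_self, abs_mul_abs_self]
  have hsqrt := psd_eq_sqrt_of_sq_eq hS (Matrix.posSemidef_conjTranspose_mul_self P) hsq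
  rw [traceNorm, ← hsqrt]
  have htr : RCLike.re ((S0 |x + z| |x - z| |y|).map (Complex.ofRealHom : ℝ → ℂ)).trace
      = |x + z| + |x - z| + |y| := by
    simp [Matrix.trace, S0, Fin.sum_univ_three]
    ring
  rw [htr]
  have h2t : (0:ℝ) ≤ 2 * t0 * t1 :=
    mul_nonneg (mul_nonneg (by norm_num) ht0) ht1
  have h1 : |x + z| = |a + c| * (2 * t0 * t1) := by
    rw [show x + z = (a + c) * (2 * t0 * t1) by rw [hx, hz]; ring, abs_mul,
      abs_of_nonneg h2t]
  have h2 : |x - z| = |a - c| * (2 * t0 * t1) := by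
    rw [show x - z = (a - c) * (2 * t0 * t1) by rw [hx, hz]; ring, abs_mul,
      abs_of_nonneg h2t]
  have h3 : |y| = |b| * |t0 ^ 2 - t1 ^ 2| := by rw [hy, abs_mul]
  rw [h1, h2, h3]
  ring
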